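/- Let X be a metric space homeomorphic to a closed, oriented smooth n-manifold in which every porous set has H^n-measure zero, let L ≥ 1, let f : X → R^n be Lipschitz, and let C ⊂ X be a compact set on which f is L-bi-Lipschitz. Then for H^n-almost every x ∈ C there exists r > 0 such that for every z ∈ B(x, r) one has d(f(x), f(z)) ≥ (7/(9L))·d(x, z); in particular f(z) ≠ f(x) for all z ∈ B(x,r) \ {x}. -/

import Mathlib

open Metric MeasureTheory Manifold CategoryTheory

/-! ### Singular homology, fundamental classes and degree

Singular homology with integer coefficients, built as the homology of the
alternating-face-map complex of the free simplicial abelian group on the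
singular simplicial set. -/

/-- The singular chain complex functor (with `ℤ` coefficients). -/
noncomputable def singularChains : TopCat ⥤ ChainComplex AddCommGrpCat ℕ :=
  TopCat.toSSet ⋙ ((SimplicialObject.whiskering _ _).obj AddCommGrpCat.free) ⋙
    AlgebraicTopology.alternatingFaceMapComplex AddCommGrpCat

/-- The `n`-th singular homology functor (with `ℤ` coefficients). -/
noncomputable def singularHomologyFunctor (n : ℕ) : TopCat ⥤ AddCommGrpCat :=
  singularChains ⋙ HomologicalComplex.homologyFunctor _ _ n

/-- The `n`-th singular homology group `H_n(X; ℤ)` of a topological space. -/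
noncomputable def SHom (n : ℕ) (X : Type) [TopologicalSpace X] : AddCommGrpCat :=
  (singularHomologyFunctor n).obj (TopCat.of X)

/-- The homomorphism induced on singular homology by a continuous map. -/
noncomputable def SHomMap (n : ℕ) {X Y : Type} [TopologicalSpace X] [TopologicalSpace Y]
    (f : C(X, Y)) : SHom n X ⟶ SHom n Y :=
  (singularHomologyFunctor n).map (TopCat.ofHom f : TopCat.of X ⟶ TopCat.of Y)

/-- `ζ` is a fundamental class of `X` in degree `n`: it generates `H_n(X; ℤ)` and has
infinite order, i.e. it witnesses `H_n(X; ℤ) ≅ ℤ`.  For a closed connected topological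
`n`-manifold, such a class exists iff the manifold is orientable, and the choice of such a
generator is exactly the choice of an orientation. -/
def IsFundamentalClass (n : ℕ) (X : Type) [TopologicalSpace X] (ζ : SHom n X) : Prop :=
  (AddSubgroup.zmultiples ζ = ⊤) ∧ ∀ m : ℤ, m • ζ = 0 → m = 0
/-- A set `A` in a metric space is porous if for each `x ∈ A` there exist `ε > 0` and a
sequence `x_k → x` with `d(x_k, A) ≥ ε · d(x_k, x)` for every `k`. -/
def IsPorous {X : Type*} [MetricSpace X] (A : Set X) : Prop :=
  ∀ x ∈ A, ∃ ε : ℝ, 0 < ε ∧ ∃ u : ℕ → X,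
    Filter.Tendsto u Filter.atTop (nhds x) ∧ ∀ k, ε * dist (u k) x ≤ Metric.infDist (u k) A

/-- Let `X` be a metric space homeomorphic to a closed oriented smooth `n`-manifold in
which porous sets are `H^n`-null, let `L ≥ 1`, let `f : X → ℝ^n` be Lipschitz and let
`C ⊆ X` be a compact set on which `f` is `L`-bi-Lipschitz. Then for `H^n`-a.e. `x ∈ C`
there is `r > 0` with `d(f(x), f(z)) ≥ (7/(9L))·d(x,z)` for all `z ∈ B(x,r)`; in
particular `f z ≠ f x` for `z ∈ B(x,r) \ {x}`. -/
theorem expansion_near_bilipschitz_pieces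
    (n : ℕ)
    -- `X` is a metric space homeomorphic to a closed, oriented smooth `n`-manifold `N`:
    (X : Type) [MetricSpace X] [MeasurableSpace X] [BorelSpace X]
    (N : Type) [TopologicalSpace N] [ChartedSpace (EuclideanSpace ℝ (Fin n)) N]
    [IsManifold (𝓡 n) (⊤ : ℕ∞) N] [CompactSpace N]
    (e : X ≃ₜ N)
    (ζX : SHom n X) (hζX : IsFundamentalClass n X ζX)
    -- porous sets in `X` are `H^n`-null:
    (hporous : ∀ A : Set X, MeasurableSet A → IsPorous A → μH[n] A = 0)
    (L : ℝ) (hL : 1 ≤ L)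
    -- `f` is Lipschitz:
    (f : X → EuclideanSpace ℝ (Fin n)) (hf : ∃ K : NNReal, LipschitzWith K f)
    -- `C` is compact and `f` is `L`-bi-Lipschitz on `C`:
    (C : Set X) (hC : IsCompact C)
    (hbil : ∀ x ∈ C, ∀ y ∈ C,
      dist x y / L ≤ dist (f x) (f y) ∧ dist (f x) (f y) ≤ L * dist x y) :
    ∀ᵐ x ∂((μH[n] : Measure X).restrict C),
      ∃ r : ℝ, 0 < r ∧
        (∀ z ∈ Metric.ball x r, 7 / (9 * L) * dist x z ≤ dist (f x) (f z)) ∧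
        ∀ z ∈ Metric.ball x r, z ≠ x → f z ≠ f x := by
  obtain ⟨K, hK⟩ := hf
  have hL0 : (0:ℝ) < L := lt_of_lt_of_le one_pos hL
  have hden : (0:ℝ) < 1 + (K:ℝ) * L := by positivity
  set ε : ℝ := 2 / (9 * (1 + (K:ℝ) * L)) with hεdef
  have hε0 : 0 < ε := by positivity
  have hεeq : ε * (1 + (K:ℝ) * L) = 2 / 9 := by
    rw [hεdef]; field_simp
  -- the "bad" set
  set S : Set X :=
    ⋂ k : ℕ, {x : X | ∃ z : X, dist z x < 1 / ((k:ℝ) + 1) ∧ ε * dist z x < Metric.infDist z C}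
    with hSdef
  have hSmeas : MeasurableSet S := by
    refine MeasurableSet.iInter fun k => ?_
    refine IsOpen.measurableSet ?_
    have : {x : X | ∃ z : X, dist z x < 1 / ((k:ℝ) + 1) ∧ ε * dist z x < Metric.infDist z C}
        = ⋃ z : X, ({x : X | dist z x < 1 / ((k:ℝ) + 1)} ∩
            {x : X | ε * dist z x < Metric.infDist z C}) := by
      ext x; simp [Set.mem_iUnion, Set.mem_inter_iff]
    rw [this]
    refine isOpen_iUnion fun z => IsOpen.inter ?_ ?_
    · exact isOpen_lt (continuous_const.dist continuous_id) continuous_const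
    · exact isOpen_lt (continuous_const.mul (continuous_const.dist continuous_id))
        continuous_const
  set A : Set X := C ∩ S with hAdef
  have hAC : A ⊆ C := Set.inter_subset_left
  have hAmeas : MeasurableSet A := (hC.isClosed.measurableSet).inter hSmeas
  have hAporous : IsPorous A := by
    intro x hxA
    refine ⟨ε, hε0, ?_⟩
    have hxS : x ∈ S := hxA.2
    simp only [hSdef, Set.mem_iInter, Set.mem_setOf_eq] at hxS
    choose u hu1 hu2 using hxS
    refine ⟨u, ?_, ?_⟩
    · rw [tendsto_iff_dist_tendsto_zero]
      refine squeeze_zero (fun k => dist_nonneg) (fun k => (hu1 k).le) ?_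
      exact tendsto_one_div_add_atTop_nhds_zero_nat
    · intro k
      refine (hu2 k).le.trans ?_
      exact Metric.infDist_le_infDist_of_subset hAC ⟨x, hxA⟩
  have hA0 : μH[n] A = 0 := hporous A hAmeas hAporous
  have hA0' : (μH[n] : Measure X).restrict C A = 0 :=
    le_antisymm (le_trans (Measure.restrict_apply_le _ _) hA0.le) (zero_le)
  have h1 : ∀ᵐ x ∂((μH[n] : Measure X).restrict C), x ∉ A :=
    measure_eq_zero_iff_ae_notMem.mp hA0'
  have h2 : ∀ᵐ x ∂((μH[n] : Measure X).restrict C), x ∈ C :=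
    ae_restrict_mem hC.isClosed.measurableSet
  filter_upwards [h1, h2] with x hxA hxC
  have hxS : x ∉ S := fun hs => hxA ⟨hxC, hs⟩
  simp only [hSdef, Set.mem_iInter, Set.mem_setOf_eq, not_forall, not_exists, not_and,
    not_lt] at hxS
  obtain ⟨k, hk⟩ := hxS
  have hrpos : (0:ℝ) < 1 / ((k:ℝ) + 1) := by positivity
  have key : ∀ z ∈ Metric.ball x (1 / ((k:ℝ) + 1)),
      7 / (9 * L) * dist x z ≤ dist (f x) (f z) := by
    intro z hz
    rw [Metric.mem_ball] at hz
    have hinf : Metric.infDist z C ≤ ε * dist z x := hk z hz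
    obtain ⟨z', hz'C, hzz'⟩ := hC.exists_infDist_eq_dist ⟨x, hxC⟩ z
    have ha : dist z z' ≤ ε * dist x z := by
      rw [← hzz', dist_comm x z]; exact hinf
    have hb : dist x z' ≤ L * dist (f x) (f z') := by
      have := (hbil x hxC z' hz'C).1
      rw [div_le_iff₀ hL0] at this
      linarith [this]
    have hg : dist (f z') (f z) ≤ (K:ℝ) * dist z z' := by
      have := hK.dist_le_mul z' z
      rwa [dist_comm z z']
    have htri : dist x z ≤ dist x z' + dist z z' := by
      rw [dist_comm z z']; exact dist_triangle x z' z
    have htri2 : dist (f x) (f z') - dist (f z') (f z) ≤ dist (f x) (f z) := by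
      linarith [dist_triangle (f x) (f z) (f z'), dist_comm (f z) (f z')] 
    have htri2' : dist (f x) (f z') ≤ dist (f x) (f z) + dist (f z') (f z) := by
      linarith
    rw [div_mul_eq_mul_div, div_le_iff₀ (by positivity : (0:ℝ) < 9 * L)]
    have hK0 : (0:ℝ) ≤ (K:ℝ) := K.coe_nonneg
    have hd0 : (0:ℝ) ≤ dist x z := dist_nonneg
    nlinarith [mul_le_mul_of_nonneg_right ha hden.le,
      mul_le_mul_of_nonneg_left hg hL0.le,
      mul_le_mul_of_nonneg_left htri2' (by positivity : (0:ℝ) ≤ 9 * L),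
      mul_nonneg hK0 hL0.le, dist_nonneg (x := f z') (y := f z)]
  refine ⟨1 / ((k:ℝ) + 1), hrpos, key, ?_⟩
  intro z hz hzx
  have h7 : 0 < 7 / (9 * L) * dist x z := by
    have : 0 < dist x z := dist_pos.mpr (Ne.symm hzx)
    positivity
  have := key z hz
  intro hfz
  rw [hfz] at this
  simp at this
  linarith
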